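/- arXiv:2011.10724 — 3 statements merged into one kernel-verified Lean document; each statement's English description precedes it below -/
import Mathlib

section
/- Fix reals a < b and let F[a,b] be the set of functions f:ℝ→ℝ satisfying |f(x_1)−f(x_2)| ≤ |x_1−x_2| for all x_1,x_2 ∈ ℝ and f(x) = 0 for all x ∉ [a,b]. For any sequence (f_n) in F[a,b] and f ∈ F[a,b], the following are equivalent: (i) f_n → f uniformly on ℝ; (ii) for every integer k ≥ 0, ∫_a^b f_n(x)·x^k dx → ∫_a^b f(x)·x^k dx as n → ∞. -/
open Filter Topology
open scoped BigOperators

section helpers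
open intervalIntegral Polynomial

private lemma lip_cont {f : ℝ → ℝ} (h : ∀ x y, |f x - f y| ≤ |x - y|) : Continuous f :=
  (LipschitzWith.of_dist_le_mul (K := 1) (fun x y => by
    simpa [Real.dist_eq] using h x y)).continuous

private lemma supp_bound {a b : ℝ} (hab : a < b) {f : ℝ → ℝ}
    (h1 : ∀ x y, |f x - f y| ≤ |x - y|) (h2 : ∀ x ∉ Set.Icc a b, f x = 0) :
    ∀ x, |f x| ≤ b - a := by
  intro x
  by_cases hx : x ∈ Set.Icc a b
  · have key : ∀ ε > 0, |f x| ≤ (b - a) + ε := by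
      intro ε hε
      have hz : f (a - ε) = 0 := h2 _ (by simp [Set.mem_Icc]; intro h; linarith)
      have := h1 x (a - ε)
      rw [hz, sub_zero] at this
      have hxa : x - (a - ε) = (x - a) + ε := by ring
      have : |f x| ≤ |x - a| + ε := by
        calc |f x| ≤ |x - (a - ε)| := this
        _ ≤ |x - a| + |ε| := by rw [hxa]; exact abs_add_le _ _
        _ = |x - a| + ε := by rw [abs_of_pos hε]
      have : |x - a| ≤ b - a := by
        rw [abs_of_nonneg (by linarith [hx.1])]; linarith [hx.2]
      linarith [h1 x (a - ε), ‹|f x| ≤ |x - a| + ε›]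
    have := le_of_forall_pos_le_add key
    linarith
  · rw [h2 x hx]; simp; linarith



private lemma weak_tendsto {a b : ℝ} (hab : a < b) (h : ℕ → ℝ → ℝ)
    (hcont : ∀ n, Continuous (h n)) (hbd : ∀ n x, |h n x| ≤ 2 * (b - a))
    (hmom : ∀ k : ℕ, Tendsto (fun n => ∫ x in a..b, h n x * x ^ k) atTop (𝓝 0))
    (φ : ℝ → ℝ) (hφ : Continuous φ) :
    Tendsto (fun n => ∫ x in a..b, h n x * φ x) atTop (𝓝 0) := by
  have hint : ∀ n (ψ : ℝ → ℝ), Continuous ψ →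
      IntervalIntegrable (fun x => h n x * ψ x) MeasureTheory.volume a b :=
    fun n ψ hψ => ((hcont n).mul hψ).intervalIntegrable a b
  -- convergence against polynomials
  have hpoly : ∀ p : ℝ[X],
      Tendsto (fun n => ∫ x in a..b, h n x * p.eval x) atTop (𝓝 0) := by
    intro p
    induction p using Polynomial.induction_on' with
    | add p q hp hq =>
      have : (fun n => ∫ x in a..b, h n x * (p + q).eval x)
          = fun n => (∫ x in a..b, h n x * p.eval x) + ∫ x in a..b, h n x * q.eval x := by
        funext n
        rw [← integral_add (hint n _ (Polynomial.continuous p)) (hint n _ (Polynomial.continuous q))]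
        simp only [Polynomial.eval_add, mul_add]
      rw [this]
      simpa using hp.add hq
    | monomial k c =>
      have : (fun n => ∫ x in a..b, h n x * (Polynomial.monomial k c).eval x)
          = fun n => c * ∫ x in a..b, h n x * x ^ k := by
        funext n
        rw [← integral_const_mul]
        congr 1; funext x; simp [Polynomial.eval_monomial]; ring
      rw [this]
      simpa using (hmom k).const_mul c
  rw [NormedAddCommGroup.tendsto_nhds_zero]
  intro ε hε
  set C : ℝ := 2 * (b - a) with hC
  have hCpos : 0 < C := by simp [hC]; linarith
  set ε' : ℝ := ε / (2 * (C * (b - a) + 1)) with hε'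
  have hε'pos : 0 < ε' := by
    apply div_pos hε; nlinarith
  obtain ⟨p, hp⟩ := exists_polynomial_near_of_continuousOn a b φ hφ.continuousOn ε' hε'pos
  have key : ∀ n, ‖(∫ x in a..b, h n x * φ x) - ∫ x in a..b, h n x * p.eval x‖ ≤ C * ε' * |b - a| := by
    intro n
    rw [← integral_sub (hint n _ hφ) (hint n _ (Polynomial.continuous p))]
    apply intervalIntegral.norm_integral_le_of_norm_le_const
    intro x hx
    have hx' : x ∈ Set.Icc a b := Set.mem_Icc_of_Ioc (Set.uIoc_of_le hab.le ▸ hx)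
    have h1 := hbd n x
    have h2 := hp x hx'
    have : h n x * φ x - h n x * p.eval x = h n x * (φ x - p.eval x) := by ring
    rw [this, Real.norm_eq_abs, abs_mul]
    have : |φ x - p.eval x| ≤ ε' := by rw [abs_sub_comm]; exact (le_of_lt h2)
    have habs : (0:ℝ) ≤ |φ x - p.eval x| := abs_nonneg _
    nlinarith [abs_nonneg (h n x)]
  filter_upwards [(NormedAddCommGroup.tendsto_nhds_zero.mp (hpoly p)) (ε/2) (by linarith)] with n hn
  have hD : (0:ℝ) < 2 * (C * (b - a) + 1) := by nlinarith
  have hCb : C * ε' * |b - a| < ε / 2 := by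
    rw [abs_of_pos (by linarith : (0:ℝ) < b - a), hε']
    have heq : C * (ε / (2 * (C * (b - a) + 1))) * (b - a)
        = (C * ε * (b - a)) / (2 * (C * (b - a) + 1)) := by ring
    rw [heq, div_lt_div_iff₀ hD two_pos]
    nlinarith
  calc ‖∫ x in a..b, h n x * φ x‖
      ≤ ‖(∫ x in a..b, h n x * φ x) - ∫ x in a..b, h n x * p.eval x‖
        + ‖∫ x in a..b, h n x * p.eval x‖ := by
        simpa using norm_sub_le_norm_sub_add_norm_sub (∫ x in a..b, h n x * φ x)
          (∫ x in a..b, h n x * p.eval x) 0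
    _ < ε := by linarith [key n]

private lemma tent_cont (t δ : ℝ) : Continuous (fun x : ℝ => max 0 (δ - |x - t|)) := by
  apply Continuous.max continuous_const
  exact continuous_const.sub ((continuous_id.sub continuous_const).abs)

private lemma tent_estimate {a b : ℝ} (hab : a < b) {h : ℝ → ℝ}
    (hlip : ∀ x y, |h x - h y| ≤ 2 * |x - y|) (hcont : Continuous h)
    {t δ : ℝ} (ht : t ∈ Set.Icc a b) (hδ0 : 0 < δ) (hδ : δ ≤ (b - a) / 2) :
    |h t| ≤ 2 * |∫ x in a..b, h x * max 0 (δ - |x - t|)| / δ ^ 2 + 2 * δ := by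
  set φ : ℝ → ℝ := fun x => max 0 (δ - |x - t|) with hφdef
  have hφc : Continuous φ := tent_cont t δ
  have hφnn : ∀ x, 0 ≤ φ x := fun x => le_max_left _ _
  set J : ℝ := ∫ x in a..b, φ x with hJ
  -- lower bound on J
  have hhalf : ∀ u : ℝ, a ≤ u → u + δ ≤ b → (∫ x in u..(u+δ), φ x) ≤ J := by
    intro u hu huδ
    have e1 : J = (∫ x in a..u, φ x) + (∫ x in u..(u+δ), φ x) + (∫ x in (u+δ)..b, φ x) := by
      rw [hJ, ← integral_add_adjacent_intervals (hφc.intervalIntegrable a u) (hφc.intervalIntegrable u b),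
        ← integral_add_adjacent_intervals (hφc.intervalIntegrable u (u+δ)) (hφc.intervalIntegrable (u+δ) b)]
      ring
    have n1 : 0 ≤ ∫ x in a..u, φ x := integral_nonneg hu (fun x _ => hφnn x)
    have n2 : 0 ≤ ∫ x in (u+δ)..b, φ x := integral_nonneg huδ (fun x _ => hφnn x)
    linarith [e1]
  have tentval : ∀ u v : ℝ, (∫ x in u..v, ((δ + t) - x)) = (δ + t) * (v - u) - (v^2 - u^2)/2 := by
    intro u v
    rw [integral_sub intervalIntegrable_const (intervalIntegral.intervalIntegrable_id), integral_const,
      integral_id]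
    simp [smul_eq_mul]; ring
  have hJlb : δ^2 / 2 ≤ J := by
    rcases le_or_gt t ((a+b)/2) with hc | hc
    · -- use [t, t+δ]
      have h1 : t + δ ≤ b := by linarith [ht.1]
      have e : (∫ x in t..(t+δ), φ x) = δ^2/2 := by
        have : ∀ x ∈ Set.uIcc t (t+δ), φ x = (δ + t) - x := by
          intro x hx
          rw [Set.uIcc_of_le (by linarith)] at hx
          have hx1 := hx.1; have hx2 := hx.2
          rw [hφdef]
          simp only
          rw [abs_of_nonneg (by linarith), max_eq_right (by linarith)]
          ring
        rw [integral_congr this, tentval]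
        ring
      have := hhalf t ht.1 h1
      rw [e] at this; exact this
    · -- use [t-δ, t]
      have h1 : a ≤ t - δ := by linarith [ht.2]
      have e : (∫ x in (t-δ)..t, φ x) = δ^2/2 := by
        have : ∀ x ∈ Set.uIcc (t-δ) t, φ x = (δ - t) + x := by
          intro x hx
          rw [Set.uIcc_of_le (by linarith)] at hx
          have hx1 := hx.1; have hx2 := hx.2
          rw [hφdef]
          simp only
          rw [abs_of_nonpos (by linarith), max_eq_right (by linarith)]
          ring
        rw [integral_congr this]
        have : (∫ x in (t-δ)..t, ((δ - t) + x)) = (δ-t)*(t - (t-δ)) + (t^2 - (t-δ)^2)/2 := by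
          rw [integral_add intervalIntegrable_const (intervalIntegral.intervalIntegrable_id),
            integral_const, integral_id]
          simp [smul_eq_mul]; ring
        rw [this]; ring
      have h2 := hhalf (t-δ) h1 (by linarith [ht.2])
      rw [sub_add_cancel, e] at h2; exact h2
  have hJpos : 0 < J := lt_of_lt_of_le (by positivity) hJlb
  -- main estimate
  set I : ℝ := |∫ x in a..b, h x * φ x| with hI
  have key : |h t| * J ≤ I + 2 * δ * J := by
    have e1 : (∫ x in a..b, (h x - h t) * φ x) = (∫ x in a..b, h x * φ x) - h t * J := by
      rw [hJ, ← integral_const_mul, ← integral_sub (f := fun x => h x * φ x) (g := fun x => h t * φ x) (((hcont).mul hφc).intervalIntegrable a b)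
        ((continuous_const.mul hφc).intervalIntegrable a b)]
      congr 1; funext x; ring
    have e2 : |∫ x in a..b, (h x - h t) * φ x| ≤ 2 * δ * J := by
      calc |∫ x in a..b, (h x - h t) * φ x| ≤ ∫ x in a..b, |(h x - h t) * φ x| := by
            exact intervalIntegral.abs_integral_le_integral_abs hab.le
        _ ≤ ∫ x in a..b, 2 * δ * φ x := by
            apply integral_mono_on hab.le
            · exact (((hcont.sub continuous_const).mul hφc).abs).intervalIntegrable a b
            · exact (continuous_const.mul hφc).intervalIntegrable a b
            intro x hx
            rw [abs_mul, abs_of_nonneg (hφnn x)]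
            rcases le_or_gt (δ - |x - t|) 0 with hcase | hcase
            · have : φ x = 0 := max_eq_left hcase
              rw [this]; simp
            · have h1 : |h x - h t| ≤ 2 * δ := by
                calc |h x - h t| ≤ 2 * |x - t| := hlip x t
                  _ ≤ 2 * δ := by nlinarith [abs_nonneg (x - t)]
              have := hφnn x
              nlinarith
        _ = 2 * δ * J := by rw [hJ, integral_const_mul]
    have : |h t * J| ≤ I + 2 * δ * J := by
      calc |h t * J| = |(∫ x in a..b, h x * φ x) - (∫ x in a..b, (h x - h t) * φ x)| := by
            rw [e1]; congr 1; ring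
        _ ≤ I + |∫ x in a..b, (h x - h t) * φ x| := abs_sub _ _
        _ ≤ I + 2 * δ * J := by linarith
    rw [abs_mul, abs_of_pos hJpos] at this
    exact this
  have step1 : |h t| ≤ (I + 2 * δ * J) / J := (le_div_iff₀ hJpos).mpr key
  have step2 : (I + 2 * δ * J) / J = I / J + 2 * δ := by field_simp
  have step3 : I / J ≤ 2 * I / δ ^ 2 := by
    have hInn : 0 ≤ I := abs_nonneg _
    calc I / J ≤ I / (δ^2/2) := by
          apply div_le_div_of_nonneg_left hInn (by positivity) hJlb
      _ = 2 * I / δ^2 := by field_simp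
  linarith [step1, step2 ▸ step1, step3]


end helpers

/-- Lemma 2.1 of Bufetov.
On the set `F[a,b]` of Lipschitz-1 functions supported on `[a,b]`, uniform convergence is
equivalent to convergence of all the moment functionals `f ↦ ∫_a^b f(x) x^k dx`. -/
theorem stmt5 (a b : ℝ) (hab : a < b) (f : ℕ → ℝ → ℝ) (g : ℝ → ℝ)
    (hf : ∀ n, (∀ x y : ℝ, |f n x - f n y| ≤ |x - y|) ∧ ∀ x ∉ Set.Icc a b, f n x = 0)
    (hg : (∀ x y : ℝ, |g x - g y| ≤ |x - y|) ∧ ∀ x ∉ Set.Icc a b, g x = 0) :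
    TendstoUniformly f g atTop ↔
      ∀ k : ℕ, Tendsto (fun n : ℕ => ∫ x in a..b, f n x * x ^ k) atTop
        (𝓝 (∫ x in a..b, g x * x ^ k)) := by
  have hcontf : ∀ n, Continuous (f n) := fun n => lip_cont (hf n).1
  have hcontg : Continuous g := lip_cont hg.1
  have hconth : ∀ n, Continuous (fun x => f n x - g x) := fun n => (hcontf n).sub hcontg
  constructor
  · intro hu k
    rw [Metric.tendsto_atTop]
    intro ε hε
    set C : ℝ := max |a| |b| ^ k + 1 with hC
    have hC0 : (0:ℝ) < C := by positivity
    set δ : ℝ := ε / (2 * C * (b - a)) with hδdef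
    have hδ0 : 0 < δ := by apply div_pos hε; nlinarith
    obtain ⟨N, hN⟩ := Filter.eventually_atTop.mp ((Metric.tendstoUniformly_iff.mp hu) δ hδ0)
    refine ⟨N, fun n hn => ?_⟩
    rw [Real.dist_eq]
    have e : (∫ x in a..b, f n x * x ^ k) - (∫ x in a..b, g x * x ^ k)
        = ∫ x in a..b, (f n x - g x) * x ^ k := by
      rw [← intervalIntegral.integral_sub (f := fun x => f n x * x ^ k) (g := fun x => g x * x ^ k) (((hcontf n).mul (continuous_pow k)).intervalIntegrable a b)
        ((hcontg.mul (continuous_pow k)).intervalIntegrable a b)]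
      congr 1; funext x; ring
    rw [e]
    have hb : ‖∫ x in a..b, (f n x - g x) * x ^ k‖ ≤ δ * C * |b - a| := by
      apply intervalIntegral.norm_integral_le_of_norm_le_const
      intro x hx
      have hx' : x ∈ Set.Icc a b := Set.mem_Icc_of_Ioc (Set.uIoc_of_le hab.le ▸ hx)
      have hxm : |x| ≤ max |a| |b| := by
        rw [abs_le]
        constructor
        · calc -(max |a| |b|) ≤ -|a| := by simp [le_max_left]
            _ ≤ a := neg_abs_le a
            _ ≤ x := hx'.1
        · calc x ≤ b := hx'.2
            _ ≤ |b| := le_abs_self b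
            _ ≤ max |a| |b| := le_max_right _ _
      have hxk : |x| ^ k ≤ C := by
        rw [hC]
        have := pow_le_pow_left₀ (abs_nonneg x) hxm k
        linarith
      have hfg : |f n x - g x| ≤ δ := by
        have := hN n hn x
        rw [Real.dist_eq, abs_sub_comm] at this
        exact this.le
      rw [Real.norm_eq_abs, abs_mul, abs_pow]
      exact mul_le_mul hfg hxk (by positivity) hδ0.le
    have : δ * C * |b - a| < ε := by
      rw [abs_of_pos (by linarith : (0:ℝ) < b - a), hδdef]
      rw [div_mul_eq_mul_div, div_mul_eq_mul_div, div_lt_iff₀ (by nlinarith : (0:ℝ) < 2 * C * (b - a))]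
      nlinarith [mul_pos (mul_pos hε hC0) (by linarith : (0:ℝ) < b - a)]
    calc ‖(∫ x in a..b, (f n x - g x) * x ^ k)‖ ≤ δ * C * |b - a| := hb
      _ < ε := this
  · intro hmom
    have hbd : ∀ n x, |f n x - g x| ≤ 2 * (b - a) := by
      intro n x
      calc |f n x - g x| ≤ |f n x| + |g x| := abs_sub _ _
        _ ≤ 2 * (b - a) := by
            linarith [supp_bound hab (hf n).1 (hf n).2 x, supp_bound hab hg.1 hg.2 x]
    have hliph : ∀ n (x y : ℝ), |(f n x - g x) - (f n y - g y)| ≤ 2 * |x - y| := by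
      intro n x y
      calc |(f n x - g x) - (f n y - g y)| = |(f n x - f n y) - (g x - g y)| := by ring_nf
        _ ≤ |f n x - f n y| + |g x - g y| := abs_sub _ _
        _ ≤ 2 * |x - y| := by linarith [(hf n).1 x y, hg.1 x y]
    have hmom0 : ∀ k, Tendsto (fun n => ∫ x in a..b, (f n x - g x) * x ^ k) atTop (𝓝 0) := by
      intro k
      have e : ∀ n, (∫ x in a..b, (f n x - g x) * x ^ k)
          = (∫ x in a..b, f n x * x ^ k) - ∫ x in a..b, g x * x ^ k := by
        intro n
        rw [← intervalIntegral.integral_sub (f := fun x => f n x * x ^ k) (g := fun x => g x * x ^ k) (((hcontf n).mul (continuous_pow k)).intervalIntegrable a b)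
          ((hcontg.mul (continuous_pow k)).intervalIntegrable a b)]
        congr 1; funext x; ring
      simp_rw [e]
      simpa using (hmom k).sub (tendsto_const_nhds (x := ∫ x in a..b, g x * x ^ k))
    rw [Metric.tendstoUniformly_iff]
    intro ε hε
    set δ : ℝ := min (ε / 8) ((b - a) / 2) with hδdef
    have hδ0 : 0 < δ := lt_min (by linarith) (by linarith)
    have hδ1 : δ ≤ ε / 8 := min_le_left _ _
    have hδ2 : δ ≤ (b - a) / 2 := min_le_right _ _
    obtain ⟨N, hN⟩ := exists_nat_gt (8 * (b - a) / ε)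
    have hN0 : (0:ℝ) < N := lt_trans (div_pos (by linarith) hε) hN
    set s : ℝ := (b - a) / N with hsdef
    have hs0 : 0 < s := div_pos (by linarith) hN0
    have hsε : s < ε / 8 := by
      rw [hsdef, div_lt_div_iff₀ hN0 (by norm_num : (0:ℝ) < 8)]
      have := (div_lt_iff₀ hε).mp hN
      nlinarith
    set t : ℕ → ℝ := fun i => a + i * s with htdef
    have hNs : (N:ℝ) * s = b - a := by rw [hsdef]; field_simp
    have hti : ∀ i : ℕ, i ≤ N → t i ∈ Set.Icc a b := by
      intro i hi
      constructor
      · simp [htdef]; positivity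
      · have : (i:ℝ) * s ≤ (N:ℝ) * s := by
          apply mul_le_mul_of_nonneg_right _ hs0.le
          exact_mod_cast hi
        simp only [htdef]; linarith [hNs ▸ this]
    have hev : ∀ᶠ n in atTop, ∀ i ∈ Finset.range (N + 1),
        |∫ x in a..b, (f n x - g x) * max 0 (δ - |x - t i|)| < ε * δ ^ 2 / 8 := by
      rw [Filter.eventually_all_finset]
      intro i _
      have hw := weak_tendsto hab (fun n x => f n x - g x) hconth hbd hmom0
        (fun x => max 0 (δ - |x - t i|)) (tent_cont (t i) δ)
      have := (NormedAddCommGroup.tendsto_nhds_zero.mp hw) (ε * δ ^ 2 / 8) (by positivity)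
      simpa [Real.norm_eq_abs] using this
    filter_upwards [hev] with n hn x
    rw [Real.dist_eq]
    by_cases hx : x ∈ Set.Icc a b
    · set i : ℕ := ⌊(x - a) / s⌋₊ with hidef
      have hxa : 0 ≤ (x - a) / s := by
        apply div_nonneg _ hs0.le; linarith [hx.1]
      have hi1 : (i:ℝ) ≤ (x - a) / s := Nat.floor_le hxa
      have hi2 : (x - a) / s < i + 1 := Nat.lt_floor_add_one _
      have hiN : i ≤ N := by
        have h1 : (x - a) / s ≤ (N:ℝ) := by
          rw [div_le_iff₀ hs0]
          have : x - a ≤ b - a := by linarith [hx.2]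
          linarith [hNs]
        calc i = ⌊(x - a) / s⌋₊ := hidef
          _ ≤ ⌊(N:ℝ)⌋₊ := Nat.floor_mono h1
          _ = N := Nat.floor_natCast N
      have hl1 : t i ≤ x := by
        have : (i:ℝ) * s ≤ x - a := (le_div_iff₀ hs0).mp hi1
        simp only [htdef]; linarith
      have hl2 : x - t i < s := by
        have : x - a < ((i:ℝ) + 1) * s := (div_lt_iff₀ hs0).mp hi2
        simp only [htdef]; nlinarith
      have hxt : |x - t i| ≤ s := by
        rw [abs_of_nonneg (by linarith)]; linarith
      have hte := tent_estimate hab (hliph n) (hconth n) (hti i hiN) hδ0 hδ2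
      have hInt := hn i (Finset.mem_range.mpr (Nat.lt_succ_of_le hiN))
      set I : ℝ := |∫ x in a..b, (f n x - g x) * max 0 (δ - |x - t i|)| with hI
      have d1 : 2 * I / δ ^ 2 < ε / 4 := by
        rw [div_lt_iff₀ (by positivity : (0:ℝ) < δ ^ 2)]
        nlinarith [hInt]
      have h1 : |f n (t i) - g (t i)| < ε / 2 := by
        calc |f n (t i) - g (t i)| ≤ 2 * I / δ ^ 2 + 2 * δ := hte
          _ < ε / 4 + 2 * (ε / 8) := by
              have : 2 * δ ≤ 2 * (ε / 8) := by linarith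
              linarith
          _ = ε / 2 := by ring
      have h2 : |f n x - g x| ≤ |f n (t i) - g (t i)| + 2 * |x - t i| := by
        have := hliph n x (t i)
        have h3 := abs_sub_abs_le_abs_sub (f n x - g x) (f n (t i) - g (t i))
        linarith
      have : |g x - f n x| = |f n x - g x| := abs_sub_comm _ _
      rw [this]
      have : 2 * |x - t i| ≤ 2 * s := by linarith
      have : 2 * s < ε / 4 := by linarith
      linarith [h2, h1]
    · rw [(hf n).2 x hx, hg.2 x hx]; simpa using hε
end

section
/- Let N, k ≥ 1 and let f be a smooth function on an open subset of ℝ^N (or a holomorphic function on an open subset of ℂ^N) consisting of points with pairwise distinct coordinates. Then at every such point, D_{N,k} f = Σ_{m=1}^k S(k,m)·Σ_{ℓ=0}^m binom(m,ℓ)·ℓ!·Σ_{{i_0,…,i_ℓ}⊆{1,…,N}} Σ_cyc (x_{i_0}^m ∂_{i_0}^{m−ℓ} f)/((x_{i_0}−x_{i_1})(x_{i_0}−x_{i_2})⋯(x_{i_0}−x_{i_ℓ})), where S(k,m) are the Stirling numbers of the second kind, the innermost subset sum is over (ℓ+1)-element subsets of {1,…,N}, and Σ_cyc denotes the sum over cyclic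 rotations of the index tuple (i_0,…,i_ℓ). -/
open Filter Topology
open scoped BigOperators

/-- Partial derivative in the `j`-th coordinate. -/
noncomputable def pd {N : ℕ} (j : Fin N) (f : (Fin N → ℂ) → ℂ) : (Fin N → ℂ) → ℂ :=
  fun x => fderiv ℂ f x (Pi.single j 1)

/-- Iterated partial derivatives along a list of coordinates. -/
noncomputable def pds {N : ℕ} : List (Fin N) → ((Fin N → ℂ) → ℂ) → ((Fin N → ℂ) → ℂ)
  | [], f => f
  | j :: t, f => pd j (pds t f)

/-- The operator `x_j ∂_j`. -/
noncomputable def xd {N : ℕ} (j : Fin N) (f : (Fin N → ℂ) → ℂ) : (Fin N → ℂ) → ℂ :=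
  fun x => x j * pd j f x

/-- Vandermonde determinant in the first `M` of `N` variables. -/
noncomputable def vandOn {N : ℕ} (M : ℕ) (h : M ≤ N) (x : Fin N → ℂ) : ℂ :=
  ∏ i : Fin M, ∏ j : Fin M, if i < j then x (Fin.castLE h i) - x (Fin.castLE h j) else 1

/-- The differential operator `D_{M,k}` acting on functions of `N ≥ M` variables, in the first
`M` variables only: `D_{M,k} f = Δ_M⁻¹ (Σ_{i=1}^M (x_i ∂_i)^k)(Δ_M f)`. -/
noncomputable def DopOn {N : ℕ} (M : ℕ) (h : M ≤ N) (k : ℕ) (f : (Fin N → ℂ) → ℂ) :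
    (Fin N → ℂ) → ℂ :=
  fun x => (vandOn M h x)⁻¹ *
    ∑ i : Fin M, (xd (Fin.castLE h i))^[k] (fun y => vandOn M h y * f y) x

/-- Stirling numbers of the second kind. -/
def stirling2 : ℕ → ℕ → ℕ
  | 0, 0 => 1
  | 0, _ + 1 => 0
  | _ + 1, 0 => 0
  | k + 1, m + 1 => (m + 1) * stirling2 k (m + 1) + stirling2 k m

section A
variable {N : ℕ} {f g : (Fin N → ℂ) → ℂ} {x : Fin N → ℂ} {i j : Fin N}

lemma pd_of_hasFDerivAt {L : (Fin N → ℂ) →L[ℂ] ℂ} (h : HasFDerivAt f L x) :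
    pd i f x = L (Pi.single i 1) := by
  rw [pd, h.fderiv]

lemma pd_congr_nhds (h : f =ᶠ[𝓝 x] g) : pd i f x = pd i g x := by
  rw [pd, pd, h.fderiv_eq]

lemma pd_congr_isOpen {U : Set (Fin N → ℂ)} (hU : IsOpen U) (hx : x ∈ U)
    (h : ∀ y ∈ U, f y = g y) : pd i f x = pd i g x :=
  pd_congr_nhds (eventually_of_mem (hU.mem_nhds hx) h)

lemma pd_const (c : ℂ) : pd i (fun _ => c) x = 0 := by
  rw [pd_of_hasFDerivAt (hasFDerivAt_const c x)]; simp

lemma pd_coord : pd i (fun y => y j) x = if j = i then 1 else 0 := by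
  have h : HasFDerivAt (fun y : Fin N → ℂ => y j)
      (ContinuousLinearMap.proj j : (Fin N → ℂ) →L[ℂ] ℂ) x := by
    exact (ContinuousLinearMap.proj (R := ℂ) (φ := fun _ : Fin N => ℂ) j).hasFDerivAt
  rw [pd_of_hasFDerivAt h]
  simp [ContinuousLinearMap.proj_apply, Pi.single_apply]

lemma pd_mul (hf : DifferentiableAt ℂ f x) (hg : DifferentiableAt ℂ g x) :
    pd i (fun y => f y * g y) x = pd i f x * g x + f x * pd i g x := by
  rw [pd_of_hasFDerivAt (f := fun y => f y * g y) (hf.hasFDerivAt.mul' hg.hasFDerivAt)]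
  simp [pd]; ring

lemma pd_sum {α : Type*} (s : Finset α) (F : α → (Fin N → ℂ) → ℂ)
    (h : ∀ b ∈ s, DifferentiableAt ℂ (F b) x) :
    pd i (fun y => ∑ b ∈ s, F b y) x = ∑ b ∈ s, pd i (F b) x := by
  have := HasFDerivAt.fun_sum (fun b hb => (h b hb).hasFDerivAt)
  rw [pd_of_hasFDerivAt this]
  simp [pd]

lemma pd_finset_prod {α : Type*} [DecidableEq α] (s : Finset α) (F : α → (Fin N → ℂ) → ℂ)
    (h : ∀ b ∈ s, DifferentiableAt ℂ (F b) x) :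
    pd i (fun y => ∏ b ∈ s, F b y) x =
      ∑ b ∈ s, (∏ c ∈ s.erase b, F c x) * pd i (F b) x := by
  have := HasFDerivAt.finset_prod (fun b hb => (h b hb).hasFDerivAt)
  rw [pd_of_hasFDerivAt this]
  simp [pd, smul_eq_mul]

lemma pd_inv (hf : DifferentiableAt ℂ f x) (h0 : f x ≠ 0) :
    pd i (fun y => (f y)⁻¹) x = -pd i f x / f x ^ 2 := by
  have h := (hasDerivAt_inv h0).comp_hasFDerivAt x hf.hasFDerivAt
  have h' : HasFDerivAt (fun y => (f y)⁻¹) (-(f x ^ 2)⁻¹ • fderiv ℂ f x) x := h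
  rw [pd_of_hasFDerivAt h']
  simp [pd]
  field_simp

lemma pd_pow_self (m : ℕ) : pd i (fun y => (y i) ^ m) x = m * x i ^ (m - 1) := by
  have h1 : HasDerivAt (fun z : ℂ => z ^ m) ((m : ℂ) * x i ^ (m - 1)) (x i) :=
    hasDerivAt_pow m (x i)
  have h2 : HasFDerivAt (fun y : Fin N → ℂ => y i)
      (ContinuousLinearMap.proj i : (Fin N → ℂ) →L[ℂ] ℂ) x := by
    exact (ContinuousLinearMap.proj (R := ℂ) (φ := fun _ : Fin N => ℂ) i).hasFDerivAt
  have h := h1.comp_hasFDerivAt x h2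
  have h' : HasFDerivAt (fun y : Fin N → ℂ => (y i) ^ m)
      (((m : ℂ) * x i ^ (m - 1)) • (ContinuousLinearMap.proj i : (Fin N → ℂ) →L[ℂ] ℂ)) x := h
  rw [pd_of_hasFDerivAt h']
  simp [ContinuousLinearMap.proj_apply, Pi.single_apply]

end A

section B
variable {N : ℕ} {U : Set (Fin N → ℂ)}

lemma diffAt_of_smOn (hU : IsOpen U) {f : (Fin N → ℂ) → ℂ} (hf : ContDiffOn ℂ ⊤ f U)
    {x : Fin N → ℂ} (hx : x ∈ U) : DifferentiableAt ℂ f x :=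
  (hf.contDiffAt (hU.mem_nhds hx)).differentiableAt (by simp)

lemma smOn_pd (hU : IsOpen U) (i : Fin N) {f : (Fin N → ℂ) → ℂ}
    (hf : ContDiffOn ℂ ⊤ f U) : ContDiffOn ℂ ⊤ (pd i f) U := by
  have h1 : ContDiffOn ℂ ⊤ (fun x => fderiv ℂ f x) U := hf.fderiv_of_isOpen hU le_top
  exact h1.clm_apply contDiffOn_const

lemma smOn_pds (hU : IsOpen U) (l : List (Fin N)) {f : (Fin N → ℂ) → ℂ}
    (hf : ContDiffOn ℂ ⊤ f U) : ContDiffOn ℂ ⊤ (pds l f) U := by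
  induction l with
  | nil => exact hf
  | cons j t ih => exact smOn_pd hU j ih

lemma smOn_coord (j : Fin N) : ContDiffOn ℂ ⊤ (fun y : Fin N → ℂ => y j) U := by
  exact ((ContinuousLinearMap.proj j : (Fin N → ℂ) →L[ℂ] ℂ)).contDiff.contDiffOn

lemma smOn_sub_coord (a b : Fin N) :
    ContDiffOn ℂ ⊤ (fun y : Fin N → ℂ => y a - y b) U :=
  (smOn_coord a).sub (smOn_coord b)

lemma smOn_prod {α : Type*} (s : Finset α) (F : α → (Fin N → ℂ) → ℂ)
    (h : ∀ b ∈ s, ContDiffOn ℂ ⊤ (F b) U) :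
    ContDiffOn ℂ ⊤ (fun y => ∏ b ∈ s, F b y) U := by
  classical
  induction s using Finset.induction with
  | empty => simpa using contDiffOn_const
  | @insert a s' hb ih =>
      simp only [Finset.prod_insert hb]
      exact (h a (Finset.mem_insert_self a s')).mul
        (ih fun b hb' => h b (Finset.mem_insert_of_mem hb'))

lemma smOn_sum {α : Type*} (s : Finset α) (F : α → (Fin N → ℂ) → ℂ)
    (h : ∀ b ∈ s, ContDiffOn ℂ ⊤ (F b) U) :
    ContDiffOn ℂ ⊤ (fun y => ∑ b ∈ s, F b y) U := by
  classical
  induction s using Finset.induction with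
  | empty => simpa using contDiffOn_const
  | @insert a s' hb ih =>
      simp only [Finset.sum_insert hb]
      exact (h a (Finset.mem_insert_self a s')).add
        (ih fun b hb' => h b (Finset.mem_insert_of_mem hb'))

lemma smOn_pow_coord (i : Fin N) (m : ℕ) :
    ContDiffOn ℂ ⊤ (fun y : Fin N → ℂ => (y i) ^ m) U := (smOn_coord i).pow m

end B

section C
variable {N : ℕ}

/-- The pair set indexing Vandermonde factors. -/
def pairSet (N : ℕ) : Finset (Fin N × Fin N) :=
  Finset.univ.filter (fun p : Fin N × Fin N => p.1 < p.2)

noncomputable def vand {N : ℕ} (x : Fin N → ℂ) : ℂ :=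
  ∏ p ∈ pairSet N, (x p.1 - x p.2)

lemma vandOn_eq_vand (x : Fin N → ℂ) : vandOn N le_rfl x = vand x := by
  rw [vandOn, vand, pairSet]
  rw [← Finset.prod_product']
  rw [Finset.prod_filter]
  apply Finset.prod_congr rfl
  intro p _
  have : Fin.castLE (le_refl N) p.1 = p.1 := by ext; simp
  have h2 : Fin.castLE (le_refl N) p.2 = p.2 := by ext; simp
  simp [this, h2]

lemma smOn_vand {U : Set (Fin N → ℂ)} : ContDiffOn ℂ ⊤ (vand (N := N)) U := by
  apply smOn_prod
  intro p _
  exact smOn_sub_coord p.1 p.2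

lemma vand_ne_zero {x : Fin N → ℂ} (hx : Function.Injective x) : vand x ≠ 0 := by
  rw [vand]
  apply Finset.prod_ne_zero_iff.2
  intro p hp
  rw [pairSet, Finset.mem_filter] at hp
  exact sub_ne_zero_of_ne (fun h => absurd (hx h) (ne_of_lt hp.2))

lemma pd_sub_coords {x : Fin N → ℂ} (i a b : Fin N) :
    pd i (fun y => y a - y b) x =
      (if a = i then (1:ℂ) else 0) - (if b = i then 1 else 0) := by
  have h : HasFDerivAt (fun y : Fin N → ℂ => y a - y b)
      ((ContinuousLinearMap.proj a : (Fin N → ℂ) →L[ℂ] ℂ)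
        - (ContinuousLinearMap.proj b : (Fin N → ℂ) →L[ℂ] ℂ)) x := by
    exact ((ContinuousLinearMap.proj (R := ℂ) (φ := fun _ : Fin N => ℂ) a).hasFDerivAt).sub
      ((ContinuousLinearMap.proj (R := ℂ) (φ := fun _ : Fin N => ℂ) b).hasFDerivAt)
  rw [pd_of_hasFDerivAt h]
  simp [Pi.single_apply]

lemma pd_vand {x : Fin N → ℂ} (hx : Function.Injective x) (i : Fin N) :
    pd i vand x = ∑ j ∈ Finset.univ.erase i, vand x * (x i - x j)⁻¹ := by
  classical
  have hfact : ∀ p ∈ pairSet N, x p.1 - x p.2 ≠ 0 := by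
    intro p hp
    rw [pairSet, Finset.mem_filter] at hp
    exact sub_ne_zero_of_ne (fun h => absurd (hx h) (ne_of_lt hp.2))
  have h0 : pd i vand x = pd i (fun y => ∏ p ∈ pairSet N, (y p.1 - y p.2)) x := rfl
  have h1 : pd i vand x = ∑ p ∈ pairSet N,
      (∏ q ∈ (pairSet N).erase p, (x q.1 - x q.2)) *
        ((if p.1 = i then (1:ℂ) else 0) - (if p.2 = i then 1 else 0)) := by
    rw [h0, pd_finset_prod (pairSet N) (fun p y => y p.1 - y p.2)
        (fun p _ => ((diffAt_of_smOn isOpen_univ (smOn_sub_coord p.1 p.2) (Set.mem_univ x))))]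
    exact Finset.sum_congr rfl fun p _ => by rw [pd_sub_coords]
  have h2 : ∀ p ∈ pairSet N, (∏ q ∈ (pairSet N).erase p, (x q.1 - x q.2))
      = vand x * (x p.1 - x p.2)⁻¹ := by
    intro p hp
    have h := Finset.prod_erase_mul (pairSet N) (fun q => x q.1 - x q.2) hp
    rw [vand, ← h, mul_assoc, mul_inv_cancel₀ (hfact p hp), mul_one]
  rw [h1, Finset.sum_congr rfl (fun p hp => by rw [h2 p hp])]
  rw [← Finset.sum_filter_of_ne (p := fun p : Fin N × Fin N => p.1 = i ∨ p.2 = i)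
    (f := fun p => vand x * (x p.1 - x p.2)⁻¹ *
        ((if p.1 = i then (1:ℂ) else 0) - (if p.2 = i then 1 else 0)))]
  · refine Finset.sum_nbij' (i := fun p : Fin N × Fin N => if p.1 = i then p.2 else p.1)
      (j := fun j => if i < j then ((i, j) : Fin N × Fin N) else (j, i))
      ?_ ?_ ?_ ?_ ?_
    · intro p hp
      simp only [pairSet, Finset.mem_filter, Finset.mem_univ, true_and] at hp
      obtain ⟨hlt, hor⟩ := hp
      rcases eq_or_ne p.1 i with h | h
      · rw [if_pos h]
        simp only [Finset.mem_erase, Finset.mem_univ, and_true]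
        intro hc; rw [h, hc] at hlt; exact lt_irrefl i hlt
      · rw [if_neg h]
        simp only [Finset.mem_erase, Finset.mem_univ, and_true]
        exact h
    · intro j hj
      rw [Finset.mem_erase] at hj
      by_cases h : i < j
      · rw [if_pos h]
        simp only [pairSet, Finset.mem_filter, Finset.mem_univ, true_and]
        exact ⟨h, Or.inl trivial⟩
      · have h' : j < i := lt_of_le_of_ne (not_lt.1 h) hj.1
        rw [if_neg h]
        simp only [pairSet, Finset.mem_filter, Finset.mem_univ, true_and]
        exact ⟨h', Or.inr trivial⟩
    · intro p hp
      simp only [pairSet, Finset.mem_filter, Finset.mem_univ, true_and] at hp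
      obtain ⟨hlt, hor⟩ := hp
      rcases eq_or_ne p.1 i with h | h
      · rw [if_pos h, if_pos (h ▸ hlt)]
        exact Prod.ext h.symm rfl
      · have h2' : p.2 = i := hor.resolve_left h
        rw [if_neg h, if_neg (by rw [← h2']; exact not_lt.2 (le_of_lt hlt))]
        exact Prod.ext rfl h2'.symm
    · intro j hj
      rw [Finset.mem_erase] at hj
      by_cases h : i < j
      · rw [if_pos h]; simp
      · have h' : j < i := lt_of_le_of_ne (not_lt.1 h) hj.1
        rw [if_neg h]
        simp [ne_of_lt h']
    · intro p hp
      simp only [pairSet, Finset.mem_filter, Finset.mem_univ, true_and] at hp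
      obtain ⟨hlt, hor⟩ := hp
      rcases eq_or_ne p.1 i with h | h
      · have hne : p.2 ≠ i := fun hc => by rw [h, hc] at hlt; exact lt_irrefl i hlt
        rw [if_pos h, if_pos h, if_neg hne, h]
        ring
      · have h2' : p.2 = i := hor.resolve_left h
        rw [if_neg h, if_neg h, if_pos h2', h2']
        rw [show (x p.1 - x i)⁻¹ = -((x i - x p.1)⁻¹) by rw [← inv_neg]; congr 1; ring]
        ring
  · intro p _ hp
    by_contra hc
    push_neg at hc
    exact hp (by simp [hc.1, hc.2])

/-- `m`-fold partial derivative in direction `i`. -/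
noncomputable def pdd {N : ℕ} (i : Fin N) (m : ℕ) (f : (Fin N → ℂ) → ℂ) : (Fin N → ℂ) → ℂ :=
  pds (List.replicate m i) f

lemma pdd_zero (i : Fin N) (f : (Fin N → ℂ) → ℂ) : pdd i 0 f = f := rfl

lemma pdd_succ (i : Fin N) (m : ℕ) (f : (Fin N → ℂ) → ℂ) :
    pdd i (m + 1) f = pd i (pdd i m f) := rfl

lemma smOn_pdd {U : Set (Fin N → ℂ)} (hU : IsOpen U) (i : Fin N) (m : ℕ)
    {f : (Fin N → ℂ) → ℂ} (hf : ContDiffOn ℂ ⊤ f U) : ContDiffOn ℂ ⊤ (pdd i m f) U :=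
  smOn_pds hU _ hf

lemma isOpen_inj : IsOpen {x : Fin N → ℂ | Function.Injective x} := by
  classical
  have he : {x : Fin N → ℂ | Function.Injective x}
      = ⋂ p ∈ pairSet N, {x : Fin N → ℂ | x p.1 ≠ x p.2} := by
    ext x
    simp only [Set.mem_setOf_eq, Set.mem_iInter]
    constructor
    · intro hx p hp hc
      rw [pairSet, Finset.mem_filter] at hp
      exact (ne_of_lt hp.2) (hx hc)
    · intro h a b hab
      by_contra hne
      rcases lt_or_gt_of_ne hne with hlt | hlt
      · exact h (a, b) (by rw [pairSet, Finset.mem_filter]; exact ⟨Finset.mem_univ _, hlt⟩) hab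
      · exact h (b, a) (by rw [pairSet, Finset.mem_filter]; exact ⟨Finset.mem_univ _, hlt⟩) hab.symm
  rw [he]
  apply isOpen_biInter_finset
  intro p _
  have : {x : Fin N → ℂ | x p.1 ≠ x p.2}
      = (fun x : Fin N → ℂ => x p.1 - x p.2) ⁻¹' {(0:ℂ)}ᶜ := by
    ext x; simp [sub_eq_zero]
  rw [this]
  exact (isOpen_compl_singleton).preimage ((continuous_apply p.1).sub (continuous_apply p.2))

lemma sum_insert_powersetCard {α : Type*} [DecidableEq α] (s : Finset α) (ℓ : ℕ)
    (F : Finset α → ℂ) :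
    ∑ B ∈ s.powersetCard ℓ, ∑ j ∈ s \ B, F (insert j B)
      = (ℓ + 1 : ℂ) * ∑ B' ∈ s.powersetCard (ℓ + 1), F B' := by
  rw [← Finset.sum_sigma (Finset.powersetCard ℓ s) (fun B => s \ B)
      (fun q => F (insert q.2 q.1))]
  have h2 : ∑ q ∈ (Finset.powersetCard (ℓ + 1) s).sigma (fun B' => B'), F q.1
      = ∑ B' ∈ s.powersetCard (ℓ + 1), (ℓ + 1 : ℂ) * F B' := by
    rw [Finset.sum_sigma]
    apply Finset.sum_congr rfl
    intro B' hB'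
    simp only
    rw [Finset.sum_const, (Finset.mem_powersetCard.1 hB').2]
    simp [mul_comm]
  rw [Finset.mul_sum, ← h2]
  refine Finset.sum_nbij'
    (i := fun q : Σ _ : Finset α, α => (⟨insert q.2 q.1, q.2⟩ : Σ _ : Finset α, α))
    (j := fun q : Σ _ : Finset α, α => (⟨q.1.erase q.2, q.2⟩ : Σ _ : Finset α, α))
    ?_ ?_ ?_ ?_ ?_
  · rintro ⟨B, j⟩ hq
    simp only [Finset.mem_sigma, Finset.mem_powersetCard, Finset.mem_sdiff] at hq ⊢
    obtain ⟨⟨hBs, hcard⟩, hjs, hjB⟩ := hq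
    refine ⟨⟨Finset.insert_subset hjs hBs, ?_⟩, Finset.mem_insert_self _ _⟩
    rw [Finset.card_insert_of_notMem hjB, hcard]
  · rintro ⟨B', j⟩ hq
    simp only [Finset.mem_sigma, Finset.mem_powersetCard, Finset.mem_sdiff] at hq ⊢
    obtain ⟨⟨hBs, hcard⟩, hjB⟩ := hq
    refine ⟨⟨(Finset.erase_subset _ _).trans hBs, ?_⟩, hBs hjB, Finset.notMem_erase _ _⟩
    rw [Finset.card_erase_of_mem hjB, hcard]
    rfl
  · rintro ⟨B, j⟩ hq
    simp only [Finset.mem_sigma, Finset.mem_powersetCard, Finset.mem_sdiff] at hq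
    have : (insert j B).erase j = B := Finset.erase_insert hq.2.2
    simp [this]
  · rintro ⟨B', j⟩ hq
    simp only [Finset.mem_sigma, Finset.mem_powersetCard, Finset.mem_sdiff] at hq
    have : insert j (B'.erase j) = B' := Finset.insert_erase hq.2
    simp [this]
  · rintro ⟨B, j⟩ _
    rfl

lemma pd_const_mul {x : Fin N → ℂ} {g : (Fin N → ℂ) → ℂ} (i : Fin N) (c : ℂ)
    (hg : DifferentiableAt ℂ g x) :
    pd i (fun y => c * g y) x = c * pd i g x := by
  rw [pd_mul (differentiableAt_const c) hg, pd_const]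
  ring

/-- inverse-linear-factors product -/
noncomputable def pinv {N : ℕ} (i : Fin N) (B : Finset (Fin N)) : (Fin N → ℂ) → ℂ :=
  fun y => ∏ j ∈ B, (y i - y j)⁻¹

lemma smOn_pinv (i : Fin N) (B : Finset (Fin N)) (hB : ∀ j ∈ B, j ≠ i) :
    ContDiffOn ℂ ⊤ (pinv i B) {y : Fin N → ℂ | Function.Injective y} := by
  apply smOn_prod
  intro j hj
  refine (smOn_sub_coord i j).inv ?_
  intro y hy
  exact sub_ne_zero_of_ne (fun h => (hB j hj) ((hy h).symm))

lemma pinv_ne_zero {x : Fin N → ℂ} (hx : Function.Injective x) (i : Fin N)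
    (B : Finset (Fin N)) (hB : ∀ j ∈ B, j ≠ i) : pinv i B x ≠ 0 := by
  rw [pinv]
  apply Finset.prod_ne_zero_iff.2
  intro j hj
  exact inv_ne_zero (sub_ne_zero_of_ne (fun h => (hB j hj) ((hx h).symm)))

lemma fac_ne_zero {x : Fin N → ℂ} (hx : Function.Injective x) {i j : Fin N} (hj : j ≠ i) :
    x i - x j ≠ 0 := sub_ne_zero_of_ne (fun h => hj ((hx h).symm))

lemma pd_pinv {x : Fin N → ℂ} (hx : Function.Injective x) (i : Fin N)
    (B : Finset (Fin N)) (hB : ∀ j ∈ B, j ≠ i) :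
    pd i (pinv i B) x = -∑ j ∈ B, (x i - x j)⁻¹ * pinv i B x := by
  classical
  have hdiff : ∀ j ∈ B, DifferentiableAt ℂ (fun y : Fin N → ℂ => (y i - y j)⁻¹) x := by
    intro j hj
    exact diffAt_of_smOn isOpen_inj
      ((smOn_sub_coord i j).inv (fun y hy => fac_ne_zero hy (hB j hj))) hx
  have h0 : pd i (pinv i B) x
      = pd i (fun y => ∏ j ∈ B, (y i - y j)⁻¹) x := rfl
  rw [h0, pd_finset_prod B (fun j y => (y i - y j)⁻¹) hdiff]
  rw [← Finset.sum_neg_distrib]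
  apply Finset.sum_congr rfl
  intro j hj
  have hne : x i - x j ≠ 0 := fac_ne_zero hx (hB j hj)
  have hpd : pd i (fun y : Fin N → ℂ => (y i - y j)⁻¹) x
      = -(1 : ℂ) / (x i - x j) ^ 2 := by
    rw [pd_inv (diffAt_of_smOn isOpen_univ (smOn_sub_coord i j) (Set.mem_univ x))
        (by exact hne)]
    rw [pd_sub_coords]
    rw [if_pos rfl, if_neg (hB j hj)]
    norm_num
  have herase : ∏ c ∈ B.erase j, (x i - x c)⁻¹ = pinv i B x * (x i - x j) := by
    have h := Finset.prod_erase_mul B (fun c => (x i - x c)⁻¹) hj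
    have h2 : pinv i B x * (x i - x j)
        = ((∏ c ∈ B.erase j, (x i - x c)⁻¹) * (x i - x j)⁻¹) * (x i - x j) := by
      rw [pinv, ← h]
    rw [h2, mul_assoc, inv_mul_cancel₀ hne, mul_one]
  rw [hpd, herase]
  field_simp

lemma pd_vand_pinv {x : Fin N → ℂ} (hx : Function.Injective x) (i : Fin N)
    (B : Finset (Fin N)) (hBsub : B ⊆ Finset.univ.erase i) :
    pd i (fun y => vand y * pinv i B y) x
      = ∑ j ∈ (Finset.univ.erase i) \ B, vand x * pinv i (insert j B) x := by
  classical
  have hB : ∀ j ∈ B, j ≠ i := fun j hj => Finset.mem_erase.1 (hBsub hj) |>.1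
  have hd1 : DifferentiableAt ℂ vand x :=
    diffAt_of_smOn isOpen_univ smOn_vand (Set.mem_univ x)
  have hd2 : DifferentiableAt ℂ (pinv i B) x :=
    diffAt_of_smOn isOpen_inj (smOn_pinv i B hB) hx
  rw [pd_mul hd1 hd2, pd_vand hx, pd_pinv hx i B hB]
  rw [← Finset.sum_sdiff hBsub, add_mul, Finset.sum_mul, Finset.sum_mul, mul_neg]
  have hBC : ∑ j ∈ B, vand x * (x i - x j)⁻¹ * pinv i B x
      = vand x * ∑ j ∈ B, (x i - x j)⁻¹ * pinv i B x := by
    rw [Finset.mul_sum]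
    exact Finset.sum_congr rfl (fun j _ => by ring)
  have hAD : ∑ j ∈ (Finset.univ.erase i) \ B, vand x * (x i - x j)⁻¹ * pinv i B x
      = ∑ j ∈ (Finset.univ.erase i) \ B, vand x * pinv i (insert j B) x := by
    apply Finset.sum_congr rfl
    intro j hj
    rw [Finset.mem_sdiff] at hj
    simp only [pinv]
    rw [Finset.prod_insert hj.2]
    ring
  linear_combination hAD + hBC

lemma pdd_vand (i : Fin N) (ℓ : ℕ) :
    ∀ x : Fin N → ℂ, Function.Injective x →
      pdd i ℓ vand x = (ℓ.factorial : ℂ) *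
        ∑ B ∈ (Finset.univ.erase i).powersetCard ℓ, vand x * pinv i B x := by
  classical
  induction ℓ with
  | zero =>
      intro x hx
      simp [pdd_zero, pinv]
  | succ ℓ ih =>
      intro x hx
      have hVopen : IsOpen {y : Fin N → ℂ | Function.Injective y} := isOpen_inj
      have hterm_diff : ∀ B ∈ (Finset.univ.erase i).powersetCard ℓ,
          DifferentiableAt ℂ (fun y => vand y * pinv i B y) x := by
        intro B hB
        have hBne : ∀ j ∈ B, j ≠ i := fun j hj =>
          (Finset.mem_erase.1 ((Finset.mem_powersetCard.1 hB).1 hj)).1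
        exact diffAt_of_smOn hVopen
          ((smOn_vand).mul (smOn_pinv i B hBne)) hx
      have hsum_diff : DifferentiableAt ℂ
          (fun y => ∑ B ∈ (Finset.univ.erase i).powersetCard ℓ, vand y * pinv i B y) x := by
        apply diffAt_of_smOn hVopen _ hx
        apply smOn_sum
        intro B hB
        have hBne : ∀ j ∈ B, j ≠ i := fun j hj =>
          (Finset.mem_erase.1 ((Finset.mem_powersetCard.1 hB).1 hj)).1
        exact (smOn_vand).mul (smOn_pinv i B hBne)
      have hcong : pdd i (ℓ + 1) vand x
          = pd i (fun y => (ℓ.factorial : ℂ) *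
              ∑ B ∈ (Finset.univ.erase i).powersetCard ℓ, vand y * pinv i B y) x := by
        rw [pdd_succ]
        exact pd_congr_isOpen hVopen hx (fun y hy => ih y hy)
      rw [hcong, pd_const_mul i _ hsum_diff,
        pd_sum _ (fun B y => vand y * pinv i B y) hterm_diff]
      rw [Finset.sum_congr rfl (fun B hB => pd_vand_pinv hx i B (Finset.mem_powersetCard.1 hB).1)]
      rw [Finset.sum_congr rfl (fun B hB => by
        apply Finset.sum_congr _ (fun j hj => rfl)
        congr 1 : ∀ B ∈ (Finset.univ.erase i).powersetCard ℓ,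
          ∑ j ∈ (Finset.univ.erase i) \ B, vand x * pinv i (insert j B) x
          = ∑ j ∈ (Finset.univ.erase i) \ B, (fun C => vand x * pinv i C x) (insert j B))]
      rw [sum_insert_powersetCard (Finset.univ.erase i) ℓ (fun C => vand x * pinv i C x)]
      rw [Nat.factorial_succ]
      push_cast
      ring

lemma stirling2_eq_zero : ∀ k m : ℕ, k < m → stirling2 k m = 0 := by
  intro k
  induction k with
  | zero => intro m hm; cases m with
      | zero => omega
      | succ m' => rfl
  | succ k ih =>
      intro m hm
      cases m with
      | zero => omega
      | succ m' =>
          have h1 : stirling2 (k+1) (m'+1) = (m'+1) * stirling2 k (m'+1) + stirling2 k m' := rfl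
          rw [h1, ih (m'+1) (by omega), ih m' (by omega)]
          ring

lemma stirling2_succ (k m : ℕ) :
    stirling2 (k+1) (m+1) = (m + 1) * stirling2 k (m+1) + stirling2 k m := rfl

lemma stirling2_succ_zero (k : ℕ) : stirling2 (k+1) 0 = 0 := rfl

lemma stirling_alg (k : ℕ) (X : ℂ) (A : ℕ → ℂ) :
    ∑ m ∈ Finset.range (k+1), (stirling2 k m : ℂ) *
        ((m : ℂ) * X ^ m * A m + X ^ (m+1) * A (m+1))
      = ∑ m ∈ Finset.range (k+2), (stirling2 (k+1) m : ℂ) * X ^ m * A m := by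
  have key : ∑ m ∈ Finset.range (k+1), (stirling2 k m : ℂ) * ((m : ℂ) * X ^ m * A m)
      = ∑ m ∈ Finset.range (k+1),
          ((m + 1 : ℂ) * (stirling2 k (m+1) : ℂ)) * (X ^ (m+1) * A (m+1)) := by
    rw [Finset.sum_range_succ' (fun m => (stirling2 k m : ℂ) * ((m : ℂ) * X ^ m * A m)) k]
    rw [Finset.sum_range_succ (fun m =>
      ((m + 1 : ℂ) * (stirling2 k (m+1) : ℂ)) * (X ^ (m+1) * A (m+1))) k]
    rw [stirling2_eq_zero k (k+1) (by omega)]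
    push_cast
    simp only [Nat.cast_zero, zero_mul, mul_zero, add_zero]
    exact Finset.sum_congr rfl (fun m _ => by push_cast; ring)
  rw [Finset.sum_range_succ' (fun m => (stirling2 (k+1) m : ℂ) * X ^ m * A m) (k+1)]
  rw [stirling2_succ_zero]
  simp only [Nat.cast_zero, zero_mul, pow_zero, add_zero]
  simp only [mul_add]
  rw [Finset.sum_add_distrib, key]
  rw [← Finset.sum_add_distrib]
  apply Finset.sum_congr rfl
  intro m _
  rw [stirling2_succ]
  push_cast
  ring

lemma leibniz_alg (m : ℕ) (A B : ℕ → ℂ) :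
    ∑ ℓ ∈ Finset.range (m+1), (m.choose ℓ : ℂ) *
        (A (ℓ+1) * B (m-ℓ) + A ℓ * B (m-ℓ+1))
      = ∑ ℓ ∈ Finset.range (m+2), ((m+1).choose ℓ : ℂ) * (A ℓ * B (m+1-ℓ)) := by
  have h2 : ∑ ℓ ∈ Finset.range (m+1), (m.choose ℓ : ℂ) * (A ℓ * B (m-ℓ+1))
      = ∑ ℓ ∈ Finset.range (m+1), (m.choose ℓ : ℂ) * (A ℓ * B (m+1-ℓ)) := by
    apply Finset.sum_congr rfl
    intro ℓ hℓ
    rw [Finset.mem_range] at hℓ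
    rw [show m - ℓ + 1 = m + 1 - ℓ by omega]
  have h3 : ∑ ℓ ∈ Finset.range (m+1), (m.choose ℓ : ℂ) * (A ℓ * B (m+1-ℓ))
      = ∑ ℓ ∈ Finset.range m, (m.choose (ℓ+1) : ℂ) * (A (ℓ+1) * B (m-ℓ))
        + (m.choose 0 : ℂ) * (A 0 * B (m+1)) := by
    rw [Finset.sum_range_succ' (fun ℓ => (m.choose ℓ : ℂ) * (A ℓ * B (m+1-ℓ))) m]
    congr 1
    apply Finset.sum_congr rfl
    intro ℓ hℓ
    rw [show m + 1 - (ℓ + 1) = m - ℓ by omega]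
  have h4 : ∑ ℓ ∈ Finset.range (m+1), (m.choose (ℓ+1) : ℂ) * (A (ℓ+1) * B (m-ℓ))
      = ∑ ℓ ∈ Finset.range m, (m.choose (ℓ+1) : ℂ) * (A (ℓ+1) * B (m-ℓ)) := by
    rw [Finset.sum_range_succ]
    rw [Nat.choose_succ_self]
    simp
  rw [Finset.sum_range_succ' (fun ℓ => ((m+1).choose ℓ : ℂ) * (A ℓ * B (m+1-ℓ))) (m+1)]
  simp only [mul_add]
  rw [Finset.sum_add_distrib, h2, h3]
  have h5 : ∀ ℓ ∈ Finset.range (m+1), ((m+1).choose (ℓ+1) : ℂ) * (A (ℓ+1) * B (m+1-(ℓ+1)))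
      = (m.choose ℓ : ℂ) * (A (ℓ+1) * B (m-ℓ)) + (m.choose (ℓ+1) : ℂ) * (A (ℓ+1) * B (m-ℓ)) := by
    intro ℓ hℓ
    rw [show m + 1 - (ℓ + 1) = m - ℓ by omega, Nat.choose_succ_succ]
    push_cast
    ring
  rw [Finset.sum_congr rfl h5, Finset.sum_add_distrib, h4]
  simp [Nat.choose_zero_right]
  ring

lemma pdd_mul {U : Set (Fin N → ℂ)} (hU : IsOpen U) (i : Fin N)
    {F G : (Fin N → ℂ) → ℂ} (hF : ContDiffOn ℂ ⊤ F U) (hG : ContDiffOn ℂ ⊤ G U) (m : ℕ) :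
    ∀ x ∈ U, pdd i m (fun y => F y * G y) x
      = ∑ ℓ ∈ Finset.range (m+1), (m.choose ℓ : ℂ) * (pdd i ℓ F x * pdd i (m-ℓ) G x) := by
  induction m with
  | zero => intro x _; simp [pdd_zero]
  | succ m ih =>
      intro x hx
      have hdF : ∀ ℓ : ℕ, ContDiffOn ℂ ⊤ (pdd i ℓ F) U := fun ℓ => smOn_pdd hU i ℓ hF
      have hdG : ∀ ℓ : ℕ, ContDiffOn ℂ ⊤ (pdd i ℓ G) U := fun ℓ => smOn_pdd hU i ℓ hG
      have hterm : ∀ ℓ : ℕ, DifferentiableAt ℂ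
          (fun y => pdd i ℓ F y * pdd i (m - ℓ) G y) x :=
        fun ℓ => diffAt_of_smOn hU ((hdF ℓ).mul (hdG (m - ℓ))) hx
      have hcong : pdd i (m+1) (fun y => F y * G y) x
          = pd i (fun y => ∑ ℓ ∈ Finset.range (m+1),
              (m.choose ℓ : ℂ) * (pdd i ℓ F y * pdd i (m-ℓ) G y)) x := by
        rw [pdd_succ]
        exact pd_congr_isOpen hU hx (fun y hy => ih y hy)
      rw [hcong, pd_sum _ (fun ℓ y => (m.choose ℓ : ℂ) * (pdd i ℓ F y * pdd i (m-ℓ) G y))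
        (fun ℓ _ => (differentiableAt_const _).mul (hterm ℓ))]
      have hstep : ∀ ℓ ∈ Finset.range (m+1),
          pd i (fun y => (m.choose ℓ : ℂ) * (pdd i ℓ F y * pdd i (m-ℓ) G y)) x
            = (m.choose ℓ : ℂ) * (pdd i (ℓ+1) F x * pdd i (m-ℓ) G x
                + pdd i ℓ F x * pdd i (m-ℓ+1) G x) := by
        intro ℓ _
        rw [pd_const_mul i _ (hterm ℓ)]
        rw [pd_mul (diffAt_of_smOn hU (hdF ℓ) hx) (diffAt_of_smOn hU (hdG (m-ℓ)) hx)]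
        rw [← pdd_succ, ← pdd_succ]
      rw [Finset.sum_congr rfl hstep]
      exact leibniz_alg m (fun ℓ => pdd i ℓ F x) (fun ℓ => pdd i ℓ G x)

lemma xd_iter {U : Set (Fin N → ℂ)} (hU : IsOpen U) (i : Fin N)
    {g : (Fin N → ℂ) → ℂ} (hg : ContDiffOn ℂ ⊤ g U) (k : ℕ) :
    ∀ x ∈ U, (xd i)^[k] g x
      = ∑ m ∈ Finset.range (k+1), (stirling2 k m : ℂ) * x i ^ m * pdd i m g x := by
  induction k with
  | zero =>
      intro x _
      simp [pdd_zero, stirling2]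
  | succ k ih =>
      intro x hx
      have hdg : ∀ m : ℕ, ContDiffOn ℂ ⊤ (pdd i m g) U := fun m => smOn_pdd hU i m hg
      have hterm : ∀ m : ℕ, DifferentiableAt ℂ
          (fun y => (stirling2 k m : ℂ) * (y i ^ m * pdd i m g y)) x := by
        intro m
        exact (differentiableAt_const _).mul
          (diffAt_of_smOn hU ((smOn_pow_coord i m).mul (hdg m)) hx)
      have h1 : (xd i)^[k+1] g x = x i * pd i ((xd i)^[k] g) x := by
        rw [Function.iterate_succ_apply']
        rfl
      have hcong : pd i ((xd i)^[k] g) x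
          = pd i (fun y => ∑ m ∈ Finset.range (k+1),
              (stirling2 k m : ℂ) * (y i ^ m * pdd i m g y)) x := by
        apply pd_congr_isOpen hU hx
        intro y hy
        rw [ih y hy]
        exact Finset.sum_congr rfl (fun m _ => by ring)
      rw [h1, hcong, pd_sum _ _ (fun m _ => hterm m)]
      have hstep : ∀ m ∈ Finset.range (k+1),
          pd i (fun y => (stirling2 k m : ℂ) * (y i ^ m * pdd i m g y)) x
            = (stirling2 k m : ℂ) * ((m : ℂ) * x i ^ (m-1) * pdd i m g x
                + x i ^ m * pdd i (m+1) g x) := by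
        intro m _
        rw [pd_const_mul i _ (diffAt_of_smOn hU ((smOn_pow_coord i m).mul (hdg m)) hx)]
        rw [pd_mul (diffAt_of_smOn isOpen_univ (smOn_pow_coord i m) (Set.mem_univ x))
          (diffAt_of_smOn hU (hdg m) hx)]
        rw [pd_pow_self, ← pdd_succ]
      rw [Finset.sum_congr rfl hstep]
      rw [Finset.mul_sum]
      have hconv : ∀ m ∈ Finset.range (k+1),
          x i * ((stirling2 k m : ℂ) * ((m : ℂ) * x i ^ (m-1) * pdd i m g x
              + x i ^ m * pdd i (m+1) g x))
            = (stirling2 k m : ℂ) * ((m : ℂ) * x i ^ m * pdd i m g x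
                + x i ^ (m+1) * pdd i (m+1) g x) := by
        intro m _
        cases m with
        | zero => push_cast; ring
        | succ m' =>
            rw [show m' + 1 - 1 = m' by omega]
            push_cast
            ring
      rw [Finset.sum_congr rfl hconv]
      exact stirling_alg k (x i) (fun m => pdd i m g x)

lemma sum_erase_powersetCard (ℓ : ℕ) (F : Fin N → Finset (Fin N) → ℂ) :
    ∑ i : Fin N, ∑ B ∈ (Finset.univ.erase i).powersetCard ℓ, F i B
      = ∑ A ∈ (Finset.univ : Finset (Fin N)).powersetCard (ℓ+1), ∑ i0 ∈ A, F i0 (A.erase i0) := by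
  classical
  rw [← Finset.sum_sigma (Finset.univ : Finset (Fin N))
      (fun i => (Finset.univ.erase i).powersetCard ℓ) (fun q => F q.1 q.2)]
  rw [← Finset.sum_sigma ((Finset.univ : Finset (Fin N)).powersetCard (ℓ+1))
      (fun A => A) (fun q => F q.2 (q.1.erase q.2))]
  refine Finset.sum_nbij'
    (i := fun q : Σ _ : Fin N, Finset (Fin N) => (⟨insert q.1 q.2, q.1⟩ : Σ _ : Finset (Fin N), Fin N))
    (j := fun q : Σ _ : Finset (Fin N), Fin N => (⟨q.2, q.1.erase q.2⟩ : Σ _ : Fin N, Finset (Fin N)))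
    ?_ ?_ ?_ ?_ ?_
  · rintro ⟨i, B⟩ hq
    simp only [Finset.mem_sigma, Finset.mem_powersetCard] at hq ⊢
    obtain ⟨-, hBs, hcard⟩ := hq
    have hiB : i ∉ B := fun h => (Finset.mem_erase.1 (hBs h)).1 rfl
    exact ⟨⟨Finset.subset_univ _, by rw [Finset.card_insert_of_notMem hiB, hcard]⟩,
      Finset.mem_insert_self _ _⟩
  · rintro ⟨A, i0⟩ hq
    simp only [Finset.mem_sigma, Finset.mem_powersetCard] at hq ⊢
    obtain ⟨⟨-, hcard⟩, hi0⟩ := hq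
    refine ⟨Finset.mem_univ _, ?_, ?_⟩
    · intro j hj
      rw [Finset.mem_erase] at hj ⊢
      exact ⟨hj.1, Finset.mem_univ _⟩
    · rw [Finset.card_erase_of_mem hi0, hcard]
      rfl
  · rintro ⟨i, B⟩ hq
    simp only [Finset.mem_sigma, Finset.mem_powersetCard] at hq
    obtain ⟨-, hBs, -⟩ := hq
    have hiB : i ∉ B := fun h => (Finset.mem_erase.1 (hBs h)).1 rfl
    have : (insert i B).erase i = B := Finset.erase_insert hiB
    simp [this]
  · rintro ⟨A, i0⟩ hq
    simp only [Finset.mem_sigma, Finset.mem_powersetCard] at hq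
    have : insert i0 (A.erase i0) = A := Finset.insert_erase hq.2
    simp [this]
  · rintro ⟨i, B⟩ hq
    simp only [Finset.mem_sigma, Finset.mem_powersetCard] at hq
    obtain ⟨-, hBs, -⟩ := hq
    have hiB : i ∉ B := fun h => (Finset.mem_erase.1 (hBs h)).1 rfl
    simp [Finset.erase_insert hiB]

/-- Lemma: expansion of the operator `D_{N,k}`.
At points with pairwise distinct coordinates, for `f` smooth (holomorphic),
`D_{N,k} f = Σ_{m=1}^k S(k,m) Σ_{ℓ=0}^m C(m,ℓ) ℓ! Σ_{|A|=ℓ+1} Σ_{i₀∈A}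
x_{i₀}^m ∂_{i₀}^{m-ℓ} f / ∏_{j∈A∖{i₀}}(x_{i₀}-x_j)`,
where the inner double sum realizes `Σ_{{i_0,…,i_ℓ}} Σ_cyc` (the denominator being symmetric in
`i_1,…,i_ℓ`). -/
theorem stmt12 (N k : ℕ) (hN : 1 ≤ N) (hk : 1 ≤ k)
    (f : (Fin N → ℂ) → ℂ) (U : Set (Fin N → ℂ)) (hU : IsOpen U)
    (hinj : ∀ x ∈ U, Function.Injective x) (hf : ContDiffOn ℂ ⊤ f U) :
    ∀ x ∈ U, DopOn (N := N) N le_rfl k f x =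
      ∑ m ∈ Finset.Icc 1 k, (stirling2 k m : ℂ) *
        ∑ ℓ ∈ Finset.range (m + 1), (m.choose ℓ : ℂ) * (ℓ.factorial : ℂ) *
          ∑ A ∈ (Finset.univ : Finset (Fin N)).powersetCard (ℓ + 1), ∑ i0 ∈ A,
            x i0 ^ m * pds (List.replicate (m - ℓ) i0) f x /
              ∏ j ∈ A.erase i0, (x i0 - x j) := by
  intro x hx
  classical
  have hxinj : Function.Injective x := hinj x hx
  have hvand : vand x ≠ 0 := vand_ne_zero hxinj
  have hg : ContDiffOn ℂ ⊤ (fun y => vand y * f y) U := smOn_vand.mul hf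
  have hgeq : (fun y => vandOn N le_rfl y * f y) = (fun y => vand y * f y) :=
    funext (fun y => by rw [vandOn_eq_vand])
  have hDop : DopOn (N := N) N le_rfl k f x
      = (vand x)⁻¹ * ∑ i : Fin N, (xd i)^[k] (fun y => vand y * f y) x := by
    rw [DopOn, vandOn_eq_vand, hgeq]
    congr 1
  -- abbreviations
  set T : ℕ → ℕ → Fin N → Finset (Fin N) → ℂ := fun m ℓ i B =>
    (stirling2 k m : ℂ) * (m.choose ℓ : ℂ) * (ℓ.factorial : ℂ) *
      (x i ^ m * pdd i (m - ℓ) f x * pinv i B x) with hT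
  have hterm : ∀ (i : Fin N) (m : ℕ),
      (stirling2 k m : ℂ) * x i ^ m * pdd i m (fun y => vand y * f y) x
        = ∑ ℓ ∈ Finset.range (m+1), ∑ B ∈ (Finset.univ.erase i).powersetCard ℓ,
            vand x * T m ℓ i B := by
    intro i m
    rw [pdd_mul hU i smOn_vand hf m x hx, Finset.mul_sum]
    refine Finset.sum_congr rfl fun ℓ _ => ?_
    rw [pdd_vand i ℓ x hxinj]
    simp only [Finset.mul_sum, Finset.sum_mul]
    exact Finset.sum_congr rfl fun B _ => by rw [hT]; ring
  have hE1 : DopOn (N := N) N le_rfl k f x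
      = ∑ i : Fin N, ∑ m ∈ Finset.range (k+1), ∑ ℓ ∈ Finset.range (m+1),
          ∑ B ∈ (Finset.univ.erase i).powersetCard ℓ, T m ℓ i B := by
    rw [hDop]
    rw [Finset.sum_congr rfl (fun i _ => xd_iter hU i hg k x hx)]
    rw [Finset.sum_congr rfl (fun i _ => Finset.sum_congr rfl (fun m _ => hterm i m))]
    simp only [Finset.mul_sum]
    refine Finset.sum_congr rfl fun i _ => Finset.sum_congr rfl fun m _ =>
      Finset.sum_congr rfl fun ℓ _ => Finset.sum_congr rfl fun B _ => ?_
    rw [← mul_assoc, inv_mul_cancel₀ hvand, one_mul]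
  -- reorder sums
  have hE2 : DopOn (N := N) N le_rfl k f x
      = ∑ m ∈ Finset.range (k+1), ∑ ℓ ∈ Finset.range (m+1),
          ∑ A ∈ (Finset.univ : Finset (Fin N)).powersetCard (ℓ+1), ∑ i0 ∈ A,
            T m ℓ i0 (A.erase i0) := by
    rw [hE1, Finset.sum_comm]
    refine Finset.sum_congr rfl fun m _ => ?_
    rw [Finset.sum_comm]
    refine Finset.sum_congr rfl fun ℓ _ => ?_
    exact sum_erase_powersetCard ℓ (T m ℓ)
  rw [hE2]
  -- restrict to m ≥ 1 and match shapes
  have hrange : ∑ m ∈ Finset.range (k+1), ∑ ℓ ∈ Finset.range (m+1),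
          ∑ A ∈ (Finset.univ : Finset (Fin N)).powersetCard (ℓ+1), ∑ i0 ∈ A,
            T m ℓ i0 (A.erase i0)
      = ∑ m ∈ Finset.Icc 1 k, ∑ ℓ ∈ Finset.range (m+1),
          ∑ A ∈ (Finset.univ : Finset (Fin N)).powersetCard (ℓ+1), ∑ i0 ∈ A,
            T m ℓ i0 (A.erase i0) := by
    symm
    apply Finset.sum_subset
    · intro m hm
      rw [Finset.mem_Icc] at hm
      rw [Finset.mem_range]
      omega
    · intro m hm hm'
      rw [Finset.mem_range] at hm
      rw [Finset.mem_Icc] at hm'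
      have hm0 : m = 0 := by omega
      subst hm0
      have hs0 : stirling2 k 0 = 0 := by
        obtain ⟨k', rfl⟩ : ∃ k', k = k' + 1 := ⟨k - 1, by omega⟩
        rfl
      simp [hT, hs0]
  rw [hrange]
  simp only [Finset.mul_sum]
  refine Finset.sum_congr rfl fun m _ => Finset.sum_congr rfl fun ℓ _ =>
    Finset.sum_congr rfl fun A _ => Finset.sum_congr rfl fun i0 _ => ?_
  rw [hT]
  have hpds : pds (List.replicate (m - ℓ) i0) f = pdd i0 (m - ℓ) f := rfl
  have hpinv : (∏ j ∈ A.erase i0, (x i0 - x j)⁻¹) = pinv i0 (A.erase i0) x := rfl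
  rw [hpds, div_eq_mul_inv, ← Finset.prod_inv_distrib, hpinv]
  ring
end C
end

section
/- Let H be a holomorphic function on an open neighborhood of 1 ∈ ℂ and let k ≥ 0 be an integer. Then for all sufficiently small r > 0: (1/(2πi))·∮_{|w−1|=r} (1/w)·(wH′(w) + w/(w−1))^{k+1} dw = (k+1)·Σ_{ℓ=0}^k (1/(ℓ+1)!)·binom(k,ℓ)·(d/dz)^ℓ(z^k H′(z)^{k−ℓ})|_{z=1}, and (1/(2πi))·∮_{|w−1|=r} (1/(w−1))·(wH′(w) + w/(w−1))^k dw = Σ_{ℓ=0}^k (1/ℓ!)·binom(k,ℓ)·(d/dz)^ℓ(z^k H′(z)^{k−ℓ})|_{z=1}, where both contour integrals are taken counterclockwise around the circle of radius r centered at 1. -/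
open Filter Topology
open scoped BigOperators
open Metric Complex

lemma cauchy_deriv (f : ℂ → ℂ) (c : ℂ) {r : ℝ} (hr : 0 < r)
    (hf : DifferentiableOn ℂ f (closedBall c r)) (n : ℕ) :
    (∮ z in C(c, r), (z - c)⁻¹ ^ (n + 1) * f z)
      = (2 * Real.pi * Complex.I) * ((n.factorial : ℂ)⁻¹ * iteratedDeriv n f c) := by
  lift r to NNReal using hr.le with R hR
  have hR0 : 0 < R := by exact_mod_cast hr
  have h := hf.hasFPowerSeriesOnBall hR0
  have key := h.factorial_smul (1 : ℂ) n
  rw [← iteratedDeriv_eq_iteratedFDeriv] at key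
  have happ := cauchyPowerSeries_apply f c R n 1
  have hEq : (∮ z in C(c, (R:ℝ)), (z - c)⁻¹ ^ (n+1) * f z)
      = ∮ z in C(c, (R:ℝ)), (1 / (z - c)) ^ n • (z - c)⁻¹ • f z := by
    refine circleIntegral.integral_congr hr.le fun z _ => ?_
    simp [one_div, pow_succ, smul_eq_mul]
    ring
  rw [hEq, ← key, happ]
  have h2 : (2 * (Real.pi:ℂ) * Complex.I) ≠ 0 := by
    simp [Real.pi_ne_zero, Complex.I_ne_zero]
  have hf0 : ((n.factorial : ℂ)) ≠ 0 := by exact_mod_cast n.factorial_ne_zero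
  field_simp [smul_eq_mul]
  simp only [nsmul_eq_mul, smul_eq_mul]
  field_simp

lemma circleIntegral_add' {f g : ℂ → ℂ} {c : ℂ} {R : ℝ} (hf : CircleIntegrable f c R)
    (hg : CircleIntegrable g c R) :
    (∮ z in C(c, R), (f z + g z)) = (∮ z in C(c, R), f z) + ∮ z in C(c, R), g z := by
  simp only [circleIntegral, smul_add, intervalIntegral.integral_add hf.out hg.out]

lemma circleIntegral_finset_sum {ι : Type*} (s : Finset ι) (F : ι → ℂ → ℂ) (c : ℂ) (R : ℝ)
    (h : ∀ i ∈ s, CircleIntegrable (F i) c R) :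
    (∮ z in C(c, R), ∑ i ∈ s, F i z) = ∑ i ∈ s, ∮ z in C(c, R), F i z := by
  simp only [circleIntegral, Finset.smul_sum]
  rw [intervalIntegral.integral_finset_sum (fun i hi => (h i hi).out)]

lemma lemB {r : ℝ} (hr : 0 < r) (M : ℕ) (c : ℕ → ℂ) (f : ℕ → ℂ → ℂ) (f₀ g : ℂ → ℂ)
    (hf₀ : DifferentiableOn ℂ f₀ (closedBall 1 r))
    (hf : ∀ ℓ, ℓ ∈ Finset.range M → DifferentiableOn ℂ (f ℓ) (closedBall 1 r))
    (hg : ∀ w ∈ sphere (1:ℂ) r,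
      g w = f₀ w + ∑ ℓ ∈ Finset.range M, c ℓ * ((w - 1)⁻¹ ^ (ℓ+1) * f ℓ w)) :
    (2 * Real.pi * Complex.I)⁻¹ * (∮ w in C((1:ℂ), r), g w)
      = ∑ ℓ ∈ Finset.range M, c ℓ * ((ℓ.factorial : ℂ)⁻¹ * iteratedDeriv ℓ (f ℓ) 1) := by
  have hsph : ∀ w ∈ sphere (1:ℂ) r, w - 1 ≠ 0 := by
    intro w hw
    simp only [mem_sphere_iff_norm] at hw
    intro h
    rw [h] at hw; simp at hw; exact hr.ne' hw.symm
  set T : ℕ → ℂ → ℂ := fun ℓ w => c ℓ * ((w - 1)⁻¹ ^ (ℓ+1) * f ℓ w) with hT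
  have hcont : ∀ ℓ, ℓ ∈ Finset.range M → CircleIntegrable (T ℓ) 1 r := by
    intro ℓ hℓ
    refine ContinuousOn.circleIntegrable hr.le ?_
    refine continuousOn_const.mul (ContinuousOn.mul ?_ (((hf ℓ hℓ).continuousOn).mono
      sphere_subset_closedBall))
    exact ((continuousOn_id.sub continuousOn_const).inv₀ hsph).pow _
  have hint0 : CircleIntegrable f₀ 1 r :=
    ContinuousOn.circleIntegrable hr.le (hf₀.continuousOn.mono sphere_subset_closedBall)
  have hintS : CircleIntegrable (fun w => ∑ ℓ ∈ Finset.range M, T ℓ w) 1 r := by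
    have h := IntervalIntegrable.sum (μ := MeasureTheory.volume) (a := 0) (b := 2*Real.pi)
      (Finset.range M) (f := fun ℓ θ => T ℓ (circleMap 1 r θ)) (fun ℓ hℓ => hcont ℓ hℓ)
    have : (fun θ => ∑ ℓ ∈ Finset.range M, T ℓ (circleMap 1 r θ))
        = ∑ ℓ ∈ Finset.range M, (fun θ => T ℓ (circleMap 1 r θ)) := by
      funext θ; simp
    show IntervalIntegrable (fun θ => ∑ ℓ ∈ Finset.range M, T ℓ (circleMap 1 r θ))
      MeasureTheory.volume 0 (2*Real.pi)
    rw [this]; exact h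
  have h1 : (∮ w in C((1:ℂ), r), g w)
      = (∮ w in C((1:ℂ), r), f₀ w) + ∮ w in C((1:ℂ), r), ∑ ℓ ∈ Finset.range M, T ℓ w := by
    rw [← circleIntegral_add' hint0 hintS]
    exact circleIntegral.integral_congr hr.le fun w hw => hg w hw
  have h0 : (∮ w in C((1:ℂ), r), f₀ w) = 0 :=
    Complex.circleIntegral_eq_zero_of_differentiable_on_off_countable hr.le Set.countable_empty
      hf₀.continuousOn (fun z hz => hf₀.differentiableAt
        (closedBall_mem_nhds_of_mem (by simpa using hz.1)))
  have h2 : (∮ w in C((1:ℂ), r), ∑ ℓ ∈ Finset.range M, T ℓ w)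
      = ∑ ℓ ∈ Finset.range M, (2 * Real.pi * Complex.I) *
          (c ℓ * ((ℓ.factorial : ℂ)⁻¹ * iteratedDeriv ℓ (f ℓ) 1)) := by
    rw [circleIntegral_finset_sum _ _ _ _ hcont]
    refine Finset.sum_congr rfl fun ℓ hℓ => ?_
    rw [hT]
    simp only
    rw [circleIntegral.integral_const_mul, cauchy_deriv (f ℓ) 1 hr (hf ℓ hℓ) ℓ]
    ring
  rw [h1, h0, h2, zero_add, ← Finset.mul_sum]
  have hne : (2 * (Real.pi:ℂ) * Complex.I) ≠ 0 := by
    simp [Real.pi_ne_zero, Complex.I_ne_zero]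
  field_simp

lemma P2 (k : ℕ) (w A : ℂ) (hw1 : w - 1 ≠ 0) :
    (w - 1)⁻¹ * (w * A + w / (w - 1)) ^ k
      = 0 + ∑ ℓ ∈ Finset.range (k+1),
          (k.choose ℓ : ℂ) * ((w - 1)⁻¹ ^ (ℓ+1) * (w^k * A^(k-ℓ))) := by
  rw [zero_add, add_pow, Finset.mul_sum, ← Finset.sum_range_reflect]
  refine Finset.sum_congr rfl fun j hj => ?_
  have hjk : j ≤ k := by simpa [Nat.lt_succ_iff] using hj
  have e1 : k + 1 - 1 - j = k - j := by omega
  have e2 : k - (k - j) = j := by omega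
  have e3 : k.choose (k - j) = k.choose j := Nat.choose_symm hjk
  have e4 : w ^ j * w ^ (k - j) = w ^ k := by rw [← pow_add]; congr 1; omega
  rw [e1, e2, e3]
  rw [mul_pow, div_pow]
  rw [← e4]
  ring

lemma P1 (k : ℕ) (w A : ℂ) (hw1 : w - 1 ≠ 0) (hw0 : w ≠ 0) :
    w⁻¹ * (w * A + w / (w - 1)) ^ (k+1)
      = (w^k * A^(k+1)) + ∑ ℓ ∈ Finset.range (k+1),
          (((k+1).choose (ℓ+1) : ℂ)) * ((w - 1)⁻¹ ^ (ℓ+1) * (w^k * A^(k-ℓ))) := by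
  rw [add_pow, Finset.sum_range_succ, mul_add, Finset.mul_sum, ← Finset.sum_range_reflect,
    add_comm]
  congr 1
  · simp only [Nat.sub_self, Nat.choose_self, pow_zero, mul_one, Nat.cast_one, mul_pow]
    rw [pow_succ]
    field_simp
  · refine Finset.sum_congr rfl fun j hj => ?_
    have hjk : j ≤ k := by simpa [Nat.lt_succ_iff] using hj
    have e1 : k + 1 - 1 - j = k - j := by omega
    have e25 : k + 1 - (k - j) = j + 1 := by omega
    have e3 : (k+1).choose (k - j) = (k+1).choose (j+1) := by
      rw [← Nat.choose_symm (by omega : j + 1 ≤ k + 1)]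
      congr 1
      omega
    have e4 : w ^ (k - j) * w ^ j = w ^ k := by rw [← pow_add]; congr 1; omega
    rw [e1, e25, e3, mul_pow, div_pow]
    rw [← e4, pow_succ w j, inv_mul_eq_iff_eq_mul₀ hw0]
    rw [div_eq_mul_inv, ← inv_pow]
    ring

lemma coef (k ℓ : ℕ) (D : ℂ) :
    (((k+1).choose (ℓ+1) : ℂ)) * (((ℓ.factorial:ℂ))⁻¹ * D)
      = ((k:ℂ)+1) * ((((ℓ+1).factorial : ℂ))⁻¹ * (k.choose ℓ : ℂ) * D) := by
  have hnat : (k+1) * k.choose ℓ = (k+1).choose (ℓ+1) * (ℓ+1) := Nat.add_one_mul_choose_eq k ℓ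
  have hcast : ((k:ℂ)+1) * (k.choose ℓ : ℂ) = ((k+1).choose (ℓ+1) : ℂ) * ((ℓ:ℂ)+1) := by
    exact_mod_cast congrArg (Nat.cast : ℕ → ℂ) hnat
  have hfacs : (((ℓ+1).factorial : ℂ)) = ((ℓ:ℂ)+1) * (ℓ.factorial : ℂ) := by
    rw [Nat.factorial_succ]; push_cast; ring
  have hfne : ((ℓ.factorial : ℂ)) ≠ 0 := by exact_mod_cast ℓ.factorial_ne_zero
  have hlne : ((ℓ:ℂ)+1) ≠ 0 := Nat.cast_add_one_ne_zero ℓ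
  rw [hfacs, mul_inv]
  field_simp
  linear_combination (-D) * hcast

/-- Proposition: contour integral formulas for the moments.
For `H` holomorphic near `1` and all sufficiently small `r > 0`, the counterclockwise contour
integrals around `1` compute the moment expressions `m_k` and `d_k`. -/
theorem stmt17 (H : ℂ → ℂ) (U : Set ℂ) (hU : IsOpen U) (h1 : (1 : ℂ) ∈ U)
    (hH : DifferentiableOn ℂ H U) (k : ℕ) :
    ∃ r₀ : ℝ, 0 < r₀ ∧ ∀ r : ℝ, 0 < r → r < r₀ →
      ((2 * Real.pi * Complex.I)⁻¹ *
          (∮ w in C((1 : ℂ), r), w⁻¹ * (w * deriv H w + w / (w - 1)) ^ (k + 1))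
        = ((k : ℂ) + 1) * ∑ ℓ ∈ Finset.range (k + 1),
            (((ℓ + 1).factorial : ℂ))⁻¹ * (k.choose ℓ : ℂ) *
              iteratedDeriv ℓ (fun z : ℂ => z ^ k * (deriv H z) ^ (k - ℓ)) 1) ∧
      ((2 * Real.pi * Complex.I)⁻¹ *
          (∮ w in C((1 : ℂ), r), (w - 1)⁻¹ * (w * deriv H w + w / (w - 1)) ^ k)
        = ∑ ℓ ∈ Finset.range (k + 1),
            ((ℓ.factorial : ℂ))⁻¹ * (k.choose ℓ : ℂ) *
              iteratedDeriv ℓ (fun z : ℂ => z ^ k * (deriv H z) ^ (k - ℓ)) 1) := by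
  obtain ⟨ε, hε, hball⟩ := Metric.isOpen_iff.1 hU 1 h1
  refine ⟨min ε 1, by positivity, fun r hr hrlt => ?_⟩
  have hr1 : r < 1 := lt_of_lt_of_le hrlt (min_le_right _ _)
  have hrε : r < ε := lt_of_lt_of_le hrlt (min_le_left _ _)
  have hsub : closedBall (1:ℂ) r ⊆ U := (closedBall_subset_ball hrε).trans hball
  have hd : DifferentiableOn ℂ (deriv H) (closedBall (1:ℂ) r) :=
    (((hH.analyticOnNhd hU).deriv).differentiableOn).mono hsub
  have hfl : ∀ ℓ : ℕ, DifferentiableOn ℂ (fun w : ℂ => w ^ k * (deriv H w) ^ (k - ℓ))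
      (closedBall (1:ℂ) r) := fun ℓ =>
    ((differentiable_pow k).differentiableOn).mul (hd.pow _)
  have hf₀1 : DifferentiableOn ℂ (fun w : ℂ => w ^ k * (deriv H w) ^ (k + 1))
      (closedBall (1:ℂ) r) :=
    ((differentiable_pow k).differentiableOn).mul (hd.pow _)
  have hw1 : ∀ w ∈ sphere (1:ℂ) r, w - 1 ≠ 0 := by
    intro w hw h
    simp only [mem_sphere_iff_norm] at hw
    rw [h] at hw; simp at hw; exact hr.ne' hw.symm
  have hw0 : ∀ w ∈ sphere (1:ℂ) r, w ≠ 0 := by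
    intro w hw h
    simp only [mem_sphere_iff_norm] at hw
    rw [h] at hw
    simp at hw
    rw [hw] at hr1
    exact lt_irrefl _ hr1
  constructor
  · have key := lemB hr (k+1) (fun ℓ => (((k+1).choose (ℓ+1) : ℕ) : ℂ))
      (fun ℓ (w : ℂ) => w ^ k * (deriv H w) ^ (k - ℓ))
      (fun w : ℂ => w ^ k * (deriv H w) ^ (k + 1))
      (fun w : ℂ => w⁻¹ * (w * deriv H w + w / (w - 1)) ^ (k + 1))
      hf₀1 (fun ℓ _ => hfl ℓ)
      (fun w hw => P1 k w (deriv H w) (hw1 w hw) (hw0 w hw))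
    rw [key, Finset.mul_sum]
    exact Finset.sum_congr rfl fun ℓ hℓ => coef k ℓ _
  · have key := lemB hr (k+1) (fun ℓ => ((k.choose ℓ : ℕ) : ℂ))
      (fun ℓ (w : ℂ) => w ^ k * (deriv H w) ^ (k - ℓ))
      (fun _ : ℂ => 0)
      (fun w : ℂ => (w - 1)⁻¹ * (w * deriv H w + w / (w - 1)) ^ k)
      (differentiableOn_const 0) (fun ℓ _ => hfl ℓ)
      (fun w hw => P2 k w (deriv H w) (hw1 w hw))
    rw [key]
    refine Finset.sum_congr rfl fun ℓ hℓ => ?_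
    ring
end
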